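/- Let d ≥ 1 and let F be a field whose characteristic is either zero or greater than d. Let f ∈ F[x_1,…,x_n,y] be a polynomial of total degree d that is monic in y with deg_y f = deg f = d (i.e., the coefficient of y^d in f is 1). Let c ∈ F be nonzero and let t be a new variable. Then f + c·t, regarded as a polynomial in F(t)[x_1,…,x_n,y], has total degree d and satisfies Hypothesis (H): it is monic in y with deg_y(f+ct) = deg(f+ct) = d, and Res( (f+ct)(0,…,0,y), (∂(f+ct)/∂y)(0,…,0,y) ) ≠ 0, where the resultant is taken of the two univariate polynomials in F(t)[y]. -/

import Mathlib

open MvPolynomial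

/-- The Sylvester matrix of `f` and `g` with respect to degrees `d₁` and `d₂`: the
`(d₁+d₂) × (d₁+d₂)` matrix whose first `d₂` columns are the shifted coefficient vectors
of `f` and whose last `d₁` columns are the shifted coefficient vectors of `g`. -/
def sylvesterMatrix {R : Type*} [CommRing R] (d₁ d₂ : ℕ) (f g : Polynomial R) :
    Matrix (Fin (d₁ + d₂)) (Fin (d₁ + d₂)) R :=
  Matrix.of fun i j =>
    if (j : ℕ) < d₂ then
      (if (j : ℕ) ≤ (i : ℕ) then f.coeff ((i : ℕ) - (j : ℕ)) else 0)
    else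
      (if (j : ℕ) - d₂ ≤ (i : ℕ) then g.coeff ((i : ℕ) - ((j : ℕ) - d₂)) else 0)

/-- The resultant of two univariate polynomials `f` and `g`: the determinant of their
Sylvester matrix (taken with respect to their degrees). -/
noncomputable def resultant {R : Type*} [CommRing R] (f g : Polynomial R) : R :=
  (sylvesterMatrix f.natDegree g.natDegree f g).det

/-- The `K`-algebra map `F[x₁,…,xₙ,y] → F[y]` evaluating at `x₁ = ⋯ = xₙ = 0` (the
variable `y` is encoded as `none`, and `xᵢ` as `some i`), i.e. `f ↦ f(0,…,0,y)`. -/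
noncomputable def atZero {K : Type*} [CommSemiring K] {n : ℕ} :
    MvPolynomial (Option (Fin n)) K →ₐ[K] Polynomial K :=
  aeval fun v => v.elim Polynomial.X (fun _ => 0)


section aux
variable {F K : Type*} [CommSemiring F] [CommSemiring K] {n : ℕ}

lemma atZero_eq (p : MvPolynomial (Option (Fin n)) K) :
    atZero p = ((optionEquivLeft K (Fin n)) p).map
      (MvPolynomial.aeval (fun _ : Fin n => (0:K))).toRingHom := by
  have : (atZero : MvPolynomial (Option (Fin n)) K →ₐ[K] Polynomial K)
      = (Polynomial.mapAlgHom (MvPolynomial.aeval (fun _ : Fin n => (0:K)))).comp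
        (optionEquivLeft K (Fin n)).toAlgHom := by
    apply MvPolynomial.algHom_ext
    rintro (_|i) <;>
      simp [atZero, optionEquivLeft_X_none, optionEquivLeft_X_some, Polynomial.mapAlgHom]
  rw [this]; rfl

lemma optionEquivLeft_map (φ : F →+* K) (p : MvPolynomial (Option (Fin n)) F) :
    (optionEquivLeft K (Fin n)) (MvPolynomial.map φ p)
      = Polynomial.map (MvPolynomial.map φ) ((optionEquivLeft F (Fin n)) p) := by
  have : (optionEquivLeft K (Fin n)).toAlgHom.toRingHom.comp
        (MvPolynomial.map φ)
      = (Polynomial.mapRingHom (MvPolynomial.map φ)).comp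
        (optionEquivLeft F (Fin n)).toAlgHom.toRingHom := by
    apply MvPolynomial.ringHom_ext
    · intro a
      simp [optionEquivLeft_C]
    · rintro (_|i) <;>
        simp [optionEquivLeft_X_none, optionEquivLeft_X_some]
  exact DFunLike.congr_fun this p

lemma atZero_map (φ : F →+* K) (p : MvPolynomial (Option (Fin n)) F) :
    atZero (MvPolynomial.map φ p) = (atZero p).map φ := by
  have : (atZero : MvPolynomial (Option (Fin n)) K →ₐ[K] _).toRingHom.comp
        (MvPolynomial.map φ)
      = (Polynomial.mapRingHom φ).comp
        (atZero : MvPolynomial (Option (Fin n)) F →ₐ[F] _).toRingHom := by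
    apply MvPolynomial.ringHom_ext
    · intro a; simp [atZero]
    · rintro (_|i) <;> simp [atZero]
  exact DFunLike.congr_fun this p

lemma atZero_pderiv (p : MvPolynomial (Option (Fin n)) K) :
    atZero ((pderiv none) p) = Polynomial.derivative (atZero p) := by
  induction p using MvPolynomial.induction_on with
  | C a => simp [atZero]
  | add p q hp hq => simp [hp, hq]
  | mul_X p v hp =>
    cases v with
    | none =>
      rw [pderiv_mul, pderiv_X_self, map_add, map_mul, map_mul, hp]
      simp [atZero, Polynomial.derivative_mul]
    | some i =>
      rw [pderiv_mul, pderiv_X_of_ne (by simp), map_add, map_mul, map_mul, hp]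
      have : atZero (X (some i) : MvPolynomial (Option (Fin n)) K) = 0 := by simp [atZero]
      simp [this]

end aux

section det
variable {F : Type*} [Field F]
open Polynomial Matrix


lemma detM_ne_zero (d : ℕ) (hd : 1 ≤ d) (P : Polynomial F)
    (hdF : (d : F) ≠ 0) (c : F) (hc : c ≠ 0)
    (hderivcoeff : (Polynomial.derivative P).coeff (d - 1) = (d : F))
    (hderivd : (Polynomial.derivative P).natDegree = d - 1) :
    (Matrix.of fun i j : Fin (d + (d - 1)) =>
      if (j : ℕ) < d - 1 then
        (if (j : ℕ) ≤ (i : ℕ) then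
            Polynomial.C (P.coeff ((i : ℕ) - (j : ℕ)))
              + (if (i : ℕ) = (j : ℕ) then Polynomial.C c * Polynomial.X else 0)
          else 0)
      else
        (if (j : ℕ) - (d - 1) ≤ (i : ℕ) then
            Polynomial.C ((Polynomial.derivative P).coeff ((i : ℕ) - ((j : ℕ) - (d - 1))))
          else 0)).det ≠ 0 := by
  classical
  set q : Polynomial F := Polynomial.C c * Polynomial.X with hq
  set A : Matrix (Fin (d + (d - 1))) (Fin (d + (d - 1))) F :=
    Matrix.of fun i j =>
      if (j : ℕ) < d - 1 then (if (j : ℕ) ≤ (i : ℕ) then P.coeff ((i : ℕ) - (j : ℕ)) else 0)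
      else (if (j : ℕ) - (d - 1) ≤ (i : ℕ) then
        (Polynomial.derivative P).coeff ((i : ℕ) - ((j : ℕ) - (d - 1))) else 0) with hA
  set B : Matrix (Fin (d + (d - 1))) (Fin (d + (d - 1))) F :=
    Matrix.of fun i j => if ((i : ℕ) < d - 1 ∧ i = j) then 1 else 0 with hB
  set M : Matrix (Fin (d + (d - 1))) (Fin (d + (d - 1))) (Polynomial F) :=
    Matrix.of fun i j =>
      if (j : ℕ) < d - 1 then
        (if (j : ℕ) ≤ (i : ℕ) then
            Polynomial.C (P.coeff ((i : ℕ) - (j : ℕ)))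
              + (if (i : ℕ) = (j : ℕ) then Polynomial.C c * Polynomial.X else 0)
          else 0)
      else
        (if (j : ℕ) - (d - 1) ≤ (i : ℕ) then
            Polynomial.C ((Polynomial.derivative P).coeff ((i : ℕ) - ((j : ℕ) - (d - 1))))
          else 0) with hM
  have hrows : (M : Fin (d + (d - 1)) → Fin (d + (d - 1)) → Polynomial F)
      = (fun i => q • (B.map Polynomial.C) i) + (fun i => (A.map Polynomial.C) i) := by
    funext i j
    show M i j = q • (B.map Polynomial.C) i j + (A.map Polynomial.C) i j
    rw [hM, hA, hB]
    simp only [Matrix.of_apply, Matrix.map_apply, smul_eq_mul]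
    by_cases h1 : (j : ℕ) < d - 1
    · rw [if_pos h1, if_pos h1]
      by_cases h2 : (j : ℕ) ≤ (i : ℕ)
      · rw [if_pos h2, if_pos h2]
        by_cases h3 : (i : ℕ) = (j : ℕ)
        · rw [if_pos h3, if_pos ⟨by omega, Fin.ext h3⟩]
          simp [hq, add_comm]
        · rw [if_neg h3, if_neg (fun hcon => h3 (congrArg Fin.val hcon.2))]
          simp
      · rw [if_neg h2, if_neg (fun hcon => h2 (le_of_eq (congrArg Fin.val hcon.2).symm))]
        simp [h2]
    · rw [if_neg h1, if_neg h1,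
        if_neg (fun hcon : (i : ℕ) < d - 1 ∧ i = j => h1 (by
          have := congrArg Fin.val hcon.2; omega))]
      split_ifs <;> simp
  have hdet1 : M.det = ∑ s : Finset (Fin (d + (d - 1))),
      Matrix.detRowAlternating (s.piecewise (fun i => q • (B.map Polynomial.C) i)
        (fun i => (A.map Polynomial.C) i)) := by
    have h := (Matrix.detRowAlternating (R := Polynomial F)
        (n := Fin (d + (d - 1)))).toMultilinearMap.map_add_univ
      (fun i => q • (B.map Polynomial.C) i) (fun i => (A.map Polynomial.C) i)
    rw [show M.det = Matrix.detRowAlternating M from rfl, hrows]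
    exact h
  set low : Finset (Fin (d + (d - 1))) := Finset.univ.filter (fun i => (i : ℕ) < d - 1)
    with hlow
  have hlowmem : ∀ i : Fin (d + (d - 1)), i ∈ low ↔ (i : ℕ) < d - 1 := by
    intro i; rw [hlow]; simp
  have hlowcard : low.card = d - 1 := by
    have hmapeq : low = Finset.image
        (fun i : Fin (d - 1) => Fin.castLE (by omega) i) Finset.univ := by
      ext i
      rw [hlowmem]
      simp only [Finset.mem_image, Finset.mem_univ, true_and]
      constructor
      · intro h; exact ⟨⟨(i : ℕ), h⟩, Fin.ext rfl⟩
      · rintro ⟨j, rfl⟩; simpa using j.isLt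
    rw [hmapeq, Finset.card_image_of_injective _
      (fun a b h => by simpa [Fin.ext_iff] using h), Finset.card_univ, Fintype.card_fin]
  have hterm : ∀ s : Finset (Fin (d + (d - 1))),
      Matrix.detRowAlternating (s.piecewise (fun i => q • (B.map Polynomial.C) i)
          (fun i => (A.map Polynomial.C) i))
        = if s ⊆ low then
            q ^ s.card * Polynomial.C ((Matrix.of (s.piecewise B A)).det) else 0 := by
    intro s
    by_cases hs : s ⊆ low
    · rw [if_pos hs]
      have hpe : s.piecewise (fun i => q • (B.map Polynomial.C) i)
            (fun i => (A.map Polynomial.C) i)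
          = s.piecewise
              (fun i => q • (s.piecewise (B.map Polynomial.C) (A.map Polynomial.C)) i)
              (s.piecewise (B.map Polynomial.C) (A.map Polynomial.C)) := by
        funext i
        by_cases hi : i ∈ s
        · rw [Finset.piecewise_eq_of_mem _ _ _ hi, Finset.piecewise_eq_of_mem _ _ _ hi]
          exact congrArg (q • ·) (Finset.piecewise_eq_of_mem _ _ _ hi).symm
        · rw [Finset.piecewise_eq_of_notMem _ _ _ hi,
            Finset.piecewise_eq_of_notMem _ _ _ hi]
          exact (Finset.piecewise_eq_of_notMem _ _ _ hi).symm
      rw [hpe]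
      have hsmul : Matrix.detRowAlternating
            (s.piecewise
              (fun i => q • (s.piecewise (B.map Polynomial.C) (A.map Polynomial.C)) i)
              (s.piecewise (B.map Polynomial.C) (A.map Polynomial.C)))
          = (∏ _i ∈ s, q) • Matrix.detRowAlternating
              (s.piecewise (B.map Polynomial.C) (A.map Polynomial.C)) :=
        MultilinearMap.map_piecewise_smul
          (Matrix.detRowAlternating (R := Polynomial F)
            (n := Fin (d + (d - 1)))).toMultilinearMap
          (fun _ => q) (s.piecewise (B.map Polynomial.C) (A.map Polynomial.C)) s
      rw [hsmul, Finset.prod_const]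
      have hpm : s.piecewise (B.map Polynomial.C) (A.map Polynomial.C)
          = (Matrix.of (s.piecewise B A)).map Polynomial.C := by
        funext i j
        by_cases hi : i ∈ s
        · rw [show s.piecewise (B.map Polynomial.C) (A.map Polynomial.C) i = B.map Polynomial.C i
            from Finset.piecewise_eq_of_mem _ _ _ hi]
          show (B.map Polynomial.C) i j = Polynomial.C ((s.piecewise B A) i j)
          rw [show (s.piecewise B A) i = B i from Finset.piecewise_eq_of_mem _ _ _ hi]
          rfl
        · rw [show s.piecewise (B.map Polynomial.C) (A.map Polynomial.C) i = A.map Polynomial.C i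
            from Finset.piecewise_eq_of_notMem _ _ _ hi]
          show (A.map Polynomial.C) i j = Polynomial.C ((s.piecewise B A) i j)
          rw [show (s.piecewise B A) i = A i from Finset.piecewise_eq_of_notMem _ _ _ hi]
          rfl
      rw [hpm, smul_eq_mul]
      congr 1
      exact (RingHom.map_det Polynomial.C (Matrix.of (s.piecewise B A))).symm
    · rw [if_neg hs]
      obtain ⟨i, his, hilow⟩ := Finset.not_subset.mp hs
      have hB0 : ∀ j, B i j = 0 := by
        intro j
        rw [hB]
        simp only [Matrix.of_apply]
        rw [if_neg]
        rintro ⟨hlt, -⟩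
        exact hilow ((hlowmem i).mpr hlt)
      refine Matrix.det_eq_zero_of_row_eq_zero i (fun j => ?_)
      show (s.piecewise (fun i => q • (B.map Polynomial.C) i)
        (fun i => (A.map Polynomial.C) i)) i j = 0
      rw [Finset.piecewise_eq_of_mem _ _ _ his]
      show q * Polynomial.C (B i j) = 0
      rw [hB0 j, map_zero, mul_zero]
  have hcoeffdet : M.det.coeff (d - 1)
      = c ^ (d - 1) * ((Matrix.of (low.piecewise B A)).det) := by
    rw [hdet1, Polynomial.finset_sum_coeff]
    have hac : ∀ s : Finset (Fin (d + (d - 1))),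
        (Matrix.detRowAlternating (s.piecewise (fun i => q • (B.map Polynomial.C) i)
            (fun i => (A.map Polynomial.C) i))).coeff (d - 1)
        = if s = low then c ^ (d - 1) * ((Matrix.of (low.piecewise B A)).det) else 0 := by
      intro s
      rw [hterm s]
      by_cases hsub : s ⊆ low
      · rw [if_pos hsub, hq, mul_pow, ← Polynomial.C_pow, mul_right_comm,
          ← Polynomial.C_mul, Polynomial.coeff_C_mul, Polynomial.coeff_X_pow]
        by_cases heq : s = low
        · rw [if_pos heq, heq, hlowcard, if_pos rfl]
          ring
        · have hlt : s.card < d - 1 :=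
            lt_of_lt_of_le (Finset.card_lt_card (lt_of_le_of_ne hsub heq)) hlowcard.le
          rw [if_neg (by omega), if_neg heq]
          ring
      · rw [if_neg hsub, if_neg (fun h : s = low => hsub (by rw [h])),
          Polynomial.coeff_zero]
    rw [Finset.sum_congr rfl (fun s _ => hac s), Finset.sum_ite_eq' Finset.univ low
      (fun _ => c ^ (d - 1) * ((Matrix.of (low.piecewise B A)).det)),
      if_pos (Finset.mem_univ low)]
  have hdets : (Matrix.of (low.piecewise B A)).det = (d : F) ^ d := by
    have hE : (d - 1) + d = d + (d - 1) := by omega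
    set e : (Fin (d - 1) ⊕ Fin d) ≃ Fin (d + (d - 1)) :=
      finSumFinEquiv.trans (finCongr hE) with he
    have hval1 : ∀ i : Fin (d - 1), ((e (Sum.inl i)) : ℕ) = (i : ℕ) := by
      intro i; simp [he]
    have hval2 : ∀ i : Fin d, ((e (Sum.inr i)) : ℕ) = (d - 1) + (i : ℕ) := by
      intro i; simp [he]; omega
    rw [← Matrix.det_submatrix_equiv_self e]
    have hblocks : (Matrix.of (low.piecewise B A)).submatrix e e
        = Matrix.fromBlocks 1 0
            (Matrix.of fun (i : Fin d) (j : Fin (d - 1)) =>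
              P.coeff ((d - 1) + (i : ℕ) - (j : ℕ)))
            (Matrix.of fun (i j : Fin d) =>
              (Polynomial.derivative P).coeff ((d - 1) + (i : ℕ) - (j : ℕ))) := by
      ext i j
      rcases i with i | i <;> rcases j with j | j <;>
        simp only [Matrix.submatrix_apply, Matrix.of_apply, Matrix.fromBlocks_apply₁₁,
          Matrix.fromBlocks_apply₁₂, Matrix.fromBlocks_apply₂₁, Matrix.fromBlocks_apply₂₂]
      · have hmem : e (Sum.inl i) ∈ low := (hlowmem _).mpr (by rw [hval1]; exact i.isLt)
        rw [show (low.piecewise B A) (e (Sum.inl i)) = B (e (Sum.inl i)) from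
          Finset.piecewise_eq_of_mem _ _ _ hmem, hB]
        simp only [Matrix.of_apply]
        rw [Matrix.one_apply]
        by_cases hij : i = j
        · rw [if_pos hij, if_pos ⟨by rw [hval1]; exact i.isLt, by rw [hij]⟩]
        · rw [if_neg hij, if_neg (fun hcon =>
            hij (Sum.inl_injective (e.injective hcon.2)))]
      · have hmem : e (Sum.inl i) ∈ low := (hlowmem _).mpr (by rw [hval1]; exact i.isLt)
        rw [show (low.piecewise B A) (e (Sum.inl i)) = B (e (Sum.inl i)) from
          Finset.piecewise_eq_of_mem _ _ _ hmem, hB]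
        simp only [Matrix.of_apply]
        rw [if_neg (fun hcon => Sum.inl_ne_inr (e.injective hcon.2))]
        simp
      · have hmem : e (Sum.inr i) ∉ low := by
          rw [hlowmem, hval2]; omega
        rw [show (low.piecewise B A) (e (Sum.inr i)) = A (e (Sum.inr i)) from
          Finset.piecewise_eq_of_notMem _ _ _ hmem, hA]
        simp only [Matrix.of_apply]
        rw [hval1, hval2, if_pos j.isLt, if_pos (by omega)]
      · have hmem : e (Sum.inr i) ∉ low := by
          rw [hlowmem, hval2]; omega
        rw [show (low.piecewise B A) (e (Sum.inr i)) = A (e (Sum.inr i)) from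
          Finset.piecewise_eq_of_notMem _ _ _ hmem, hA]
        simp only [Matrix.of_apply]
        rw [hval2, hval2, if_neg (by omega), if_pos (by omega)]
        congr 1
        omega
    rw [hblocks, Matrix.det_fromBlocks_zero₁₂, Matrix.det_one, one_mul]
    have htri : Matrix.BlockTriangular (Matrix.of fun (i j : Fin d) =>
        (Polynomial.derivative P).coeff ((d - 1) + (i : ℕ) - (j : ℕ))) id := by
      intro i j hij
      simp only [Matrix.of_apply]
      apply Polynomial.coeff_eq_zero_of_natDegree_lt
      rw [hderivd]
      have : (j : ℕ) < (i : ℕ) := hij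
      omega
    rw [Matrix.det_of_upperTriangular htri]
    have hdiag : ∀ i : Fin d, (Matrix.of fun (i j : Fin d) =>
        (Polynomial.derivative P).coeff ((d - 1) + (i : ℕ) - (j : ℕ))) i i = (d : F) := by
      intro i
      simp only [Matrix.of_apply]
      rw [show (d - 1) + (i : ℕ) - (i : ℕ) = d - 1 by omega, hderivcoeff]
    rw [Finset.prod_congr rfl (fun i _ => hdiag i), Finset.prod_const, Finset.card_univ,
      Fintype.card_fin]
  intro h0
  rw [h0, Polynomial.coeff_zero, hdets] at hcoeffdet
  exact (mul_ne_zero (pow_ne_zero _ hc) (pow_ne_zero _ hdF)) hcoeffdet.symm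

lemma resultant_add_ct_ne_zero (d : ℕ) (hd : 1 ≤ d) (P : Polynomial F)
    (hP : P.Monic) (hPd : P.natDegree = d) (hdF : (d : F) ≠ 0)
    (c : F) (hc : c ≠ 0) :
    _root_.resultant (P.map (algebraMap F (RatFunc F)) + Polynomial.C (RatFunc.C c * RatFunc.X))
      ((Polynomial.derivative P).map (algebraMap F (RatFunc F))) ≠ 0 := by
  set φ := algebraMap F (RatFunc F) with hφ
  set ι := algebraMap (Polynomial F) (RatFunc F) with hι
  set Q := P.map φ + Polynomial.C (RatFunc.C c * RatFunc.X) with hQ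
  set Q' := (Polynomial.derivative P).map φ with hQ'
  have hφC : ∀ a : F, φ a = RatFunc.C a := fun a => by
    rw [hφ, RatFunc.algebraMap_eq_C]
  have hιC : ∀ a : F, ι (Polynomial.C a) = RatFunc.C a := fun a => by
    rw [hι, RatFunc.algebraMap_C]
  -- degrees
  have hmap : (P.map φ).Monic := hP.map φ
  have hmapd : (P.map φ).natDegree = d := by rw [hP.natDegree_map]; exact hPd
  have hdegC : (Polynomial.C (RatFunc.C c * RatFunc.X)).degree < (P.map φ).degree := by
    refine Polynomial.degree_C_le.trans_lt ?_
    rw [Polynomial.degree_eq_natDegree hmap.ne_zero, hmapd]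
    exact_mod_cast Nat.pos_of_ne_zero (by omega)
  have hQdeg : Q.degree = (P.map φ).degree := Polynomial.degree_add_eq_left_of_degree_lt hdegC
  have hQd : Q.natDegree = d := by
    rw [Polynomial.natDegree_eq_of_degree_eq hQdeg]; exact hmapd
  have hderivcoeff : (Polynomial.derivative P).coeff (d - 1) = (d : F) := by
    rw [Polynomial.coeff_derivative]
    have h1 : d - 1 + 1 = d := by omega
    have h2 : P.coeff d = 1 := by rw [← hPd]; exact hP.coeff_natDegree
    have h3 : ((d - 1 : ℕ) : F) + 1 = (d : F) := by exact_mod_cast congrArg (Nat.cast (R := F)) h1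
    rw [h1, h2, one_mul, h3]
  have hderivd : (Polynomial.derivative P).natDegree = d - 1 := by
    refine le_antisymm ((Polynomial.natDegree_derivative_le P).trans (by rw [hPd])) ?_
    exact Polynomial.le_natDegree_of_ne_zero (by rw [hderivcoeff]; exact hdF)
  have hQ'd : Q'.natDegree = d - 1 := by
    rw [hQ', Polynomial.natDegree_map, hderivd]
  -- the matrix over F[t]
  set M : Matrix (Fin (d + (d - 1))) (Fin (d + (d - 1))) (Polynomial F) :=
    Matrix.of fun i j =>
      if (j : ℕ) < d - 1 then
        (if (j : ℕ) ≤ (i : ℕ) then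
            Polynomial.C (P.coeff ((i : ℕ) - (j : ℕ)))
              + (if (i : ℕ) = (j : ℕ) then Polynomial.C c * Polynomial.X else 0)
          else 0)
      else
        (if (j : ℕ) - (d - 1) ≤ (i : ℕ) then
            Polynomial.C ((Polynomial.derivative P).coeff ((i : ℕ) - ((j : ℕ) - (d - 1))))
          else 0) with hM
  have hQcoeff : ∀ m : ℕ, Q.coeff m
      = RatFunc.C (P.coeff m) + (if m = 0 then RatFunc.C c * RatFunc.X else 0) := by
    intro m
    rw [hQ, Polynomial.coeff_add, Polynomial.coeff_map, hφC, Polynomial.coeff_C]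
  have hιX : ι (Polynomial.C c * Polynomial.X) = RatFunc.C c * RatFunc.X := by
    rw [_root_.map_mul, hιC, hι, RatFunc.algebraMap_X]
  have hSyl : sylvesterMatrix d (d - 1) Q Q' = M.map ι := by
    ext i j
    rw [sylvesterMatrix, hM]
    simp only [Matrix.map_apply, Matrix.of_apply]
    by_cases h1 : (j : ℕ) < d - 1
    · simp only [if_pos h1]
      by_cases h2 : (j : ℕ) ≤ (i : ℕ)
      · simp only [if_pos h2, map_add, hιC, hQcoeff]
        congr 1
        by_cases h3 : (i : ℕ) = (j : ℕ)
        · rw [if_pos h3, if_pos (by omega), hιX]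
        · rw [if_neg h3, if_neg (by omega), map_zero]
      · simp only [if_neg h2, map_zero]
    · simp only [if_neg h1]
      by_cases h2 : (j : ℕ) - (d - 1) ≤ (i : ℕ)
      · rw [if_pos h2, if_pos h2, hQ', Polynomial.coeff_map, hφC, hιC]
      · rw [if_neg h2, if_neg h2, map_zero]
  have hMdet : M.det ≠ 0 := by
    rw [hM]
    exact detM_ne_zero d hd P hdF c hc hderivcoeff hderivd
  have key : _root_.resultant Q Q' = ι M.det := by
    rw [_root_.resultant, hQd, hQ'd, hSyl, RingHom.map_det]
    rfl
  rw [key]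
  intro h
  exact hMdet (by
    have := RatFunc.algebraMap_injective F
    exact this (by rw [← hι] at *; rw [h, map_zero]))

end det


/-- `f ∈ K[x₁,…,xₙ,y]` satisfies **Hypothesis (H)** if (1) `f` is monic in `y` and
`deg_y f = deg f`, and (2) `Res(f(0,…,0,y), (∂f/∂y)(0,…,0,y)) ≠ 0`. -/
def SatisfiesHypH {K : Type*} [Field K] {n : ℕ}
    (f : MvPolynomial (Option (Fin n)) K) : Prop :=
  ((optionEquivLeft K (Fin n)) f).Monic ∧
  ((optionEquivLeft K (Fin n)) f).natDegree = f.totalDegree ∧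
  resultant (atZero f) (atZero ((pderiv none) f)) ≠ 0

/-- **Adding `c·t` produces a polynomial satisfying Hypothesis (H).**
Let `d ≥ 1` and let `F` be a field of characteristic zero or greater than `d`. Let
`f ∈ F[x₁,…,xₙ,y]` have total degree `d`, be monic in `y`, and satisfy
`deg_y f = deg f = d`. Let `c ∈ F` be nonzero and `t` a new variable. Then `f + c·t`,
viewed in `F(t)[x₁,…,xₙ,y]`, has total degree `d` and satisfies Hypothesis (H). -/
theorem add_ct_satisfies_hypothesis_H
    (F : Type) [Field F] (n d : ℕ) (hd : 1 ≤ d)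
    (hchar : ringChar F = 0 ∨ d < ringChar F)
    (f : MvPolynomial (Option (Fin n)) F)
    (hmonic : ((optionEquivLeft F (Fin n)) f).Monic)
    (hdegy : ((optionEquivLeft F (Fin n)) f).natDegree = d)
    (hdeg : f.totalDegree = d)
    (c : F) (hc : c ≠ 0) :
    (MvPolynomial.map (algebraMap F (RatFunc F)) f
        + MvPolynomial.C (RatFunc.C c * RatFunc.X)).totalDegree = d ∧
    SatisfiesHypH (MvPolynomial.map (algebraMap F (RatFunc F)) f
        + MvPolynomial.C (RatFunc.C c * RatFunc.X)) := by
  set φ := algebraMap F (RatFunc F) with hφ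
  set g := MvPolynomial.map φ f + MvPolynomial.C (RatFunc.C c * RatFunc.X) with hg
  have hφinj : Function.Injective φ := φ.injective
  have hf0 : f ≠ 0 := by
    intro h
    rw [h, totalDegree_zero] at hdeg
    omega
  have hmapdeg : (MvPolynomial.map φ f).totalDegree = d := by
    rw [MvPolynomial.totalDegree, MvPolynomial.support_map_of_injective f hφinj, ← hdeg]
    rfl
  have htd : g.totalDegree = d := by
    apply le_antisymm
    · refine (MvPolynomial.totalDegree_add _ _).trans ?_
      rw [hmapdeg, MvPolynomial.totalDegree_C]
      omega
    · have hne : (MvPolynomial.map φ f).support.Nonempty :=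
        MvPolynomial.support_nonempty.mpr
          (fun h => hf0 (MvPolynomial.map_injective φ hφinj (by rw [h, map_zero])))
      obtain ⟨m, hm, hmax⟩ := Finset.exists_mem_eq_sup _ hne
        (fun s : (Option (Fin n)) →₀ ℕ => s.sum fun _ e => e)
      have hmd : (m.sum fun _ e => e) = d := by
        rw [← hmax]; exact hmapdeg
      have hm0 : m ≠ 0 := by
        intro h
        rw [h, Finsupp.sum_zero_index] at hmd
        omega
      have hcg : MvPolynomial.coeff m g ≠ 0 := by
        rw [hg, MvPolynomial.coeff_add, MvPolynomial.coeff_C, if_neg (fun h => hm0 h.symm),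
          add_zero]
        exact MvPolynomial.mem_support_iff.mp hm
      exact hmd ▸ MvPolynomial.le_totalDegree (MvPolynomial.mem_support_iff.mpr hcg)
  have hoel : (optionEquivLeft (RatFunc F) (Fin n)) g
      = ((optionEquivLeft F (Fin n)) f).map (MvPolynomial.map φ)
        + Polynomial.C (MvPolynomial.C (RatFunc.C c * RatFunc.X)) := by
    rw [hg, map_add, optionEquivLeft_map φ f, optionEquivLeft_C]
  have hmono0 : (((optionEquivLeft F (Fin n)) f).map (MvPolynomial.map φ)).Monic :=
    hmonic.map _
  have hdeg0 : (((optionEquivLeft F (Fin n)) f).map (MvPolynomial.map φ)).natDegree = d := by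
    rw [hmonic.natDegree_map]; exact hdegy
  have hdegClt : (Polynomial.C ((MvPolynomial.C (RatFunc.C c * RatFunc.X))
        : MvPolynomial (Fin n) (RatFunc F))).degree
      < (((optionEquivLeft F (Fin n)) f).map (MvPolynomial.map φ)).degree := by
    refine Polynomial.degree_C_le.trans_lt ?_
    rw [Polynomial.degree_eq_natDegree hmono0.ne_zero, hdeg0]
    exact_mod_cast Nat.pos_of_ne_zero (by omega)
  have hgmonic : ((optionEquivLeft (RatFunc F) (Fin n)) g).Monic := by
    rw [hoel]; exact hmono0.add_of_left hdegClt
  have hgdeg : ((optionEquivLeft (RatFunc F) (Fin n)) g).natDegree = d := by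
    rw [hoel, Polynomial.natDegree_eq_of_degree_eq
      (Polynomial.degree_add_eq_left_of_degree_lt hdegClt), hdeg0]
  have hP : (atZero f).Monic := by
    rw [atZero_eq]; exact hmonic.map _
  have hPd : (atZero f).natDegree = d := by
    rw [atZero_eq, hmonic.natDegree_map]; exact hdegy
  have hdF : (d : F) ≠ 0 := by
    rcases hchar with h0 | hlt
    · haveI : CharP F 0 := h0 ▸ ringChar.charP F
      haveI : CharZero F := CharP.charP_to_charZero F
      exact Nat.cast_ne_zero.mpr (by omega)
    · intro h
      have h1 := ringChar.dvd h
      have h2 := Nat.le_of_dvd (by omega) h1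
      omega
  have hatz : atZero g = (atZero f).map φ + Polynomial.C (RatFunc.C c * RatFunc.X) := by
    rw [hg, map_add, atZero_map φ f]
    congr 1
    simp [atZero]
  have hatz' : atZero ((pderiv none) g)
      = (Polynomial.derivative (atZero f)).map φ := by
    rw [hg, map_add, pderiv_C, add_zero, pderiv_map, atZero_map, atZero_pderiv]
  refine ⟨htd, hgmonic, by rw [hgdeg, htd], ?_⟩
  rw [hatz, hatz']
  exact resultant_add_ct_ne_zero d hd (atZero f) hP hPd hdF c hc
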